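/- For every k ∈ ℕ, the following two ideals of ℤ[s,t] are equal: the ideal generated by P_{(k+1,0)}(s,t) and P_{(k+2,0)}(s,t), and the ideal generated by the set {P_λ(s,t) : λ ∈ ℕ₀², λ1 + λ2 = k+1}. -/

import Mathlib

set_option synthInstance.maxHeartbeats 1000000
set_option maxHeartbeats 2000000


open MvPolynomial

noncomputable section

abbrev Rxy : Type := MvPolynomial (Fin 2) ℤ

/-- The fraction field of ℤ[x,y]. -/
abbrev Kxy : Type := FractionRing Rxy

/-- The image of `x` in the fraction field. -/
noncomputable def xx : Kxy := algebraMap Rxy Kxy (X 0)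

/-- The image of `y` in the fraction field. -/
noncomputable def yy : Kxy := algebraMap Rxy Kxy (X 1)

/-- `s = x / y²`. -/
noncomputable def sv : Kxy := xx / yy ^ 2

/-- `t = y / x²`. -/
noncomputable def tv : Kxy := yy / xx ^ 2

/-- Evaluation of a two-variable integer polynomial at `(s, t)` in the fraction field. -/
noncomputable def evST (p : Rxy) : Kxy := aeval ![sv, tv] p

/-- Defining properties of the SU(3) character polynomials `Q a b`
(with the convention `Q a b = 0` whenever `(a, b) ∉ ℕ₀²`). -/
def IsQSU3 (Q : ℤ → ℤ → Rxy) : Prop :=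
  (∀ a b : ℤ, (a < 0 ∨ b < 0) → Q a b = 0) ∧
  Q 0 0 = 1 ∧
  Q 1 0 = X 0 ∧
  (∀ a b : ℤ, 0 ≤ a → 0 ≤ b →
    X 0 * Q a b = Q (a + 1) b + Q a (b - 1) + Q (a - 1) (b + 1)) ∧
  (∀ a b : ℤ, rename (Equiv.swap (0 : Fin 2) 1) (Q a b) = Q b a)

/-- Defining property of the polynomials `P a b` (in the variables `s, t`), namely
`P_λ(x/y², y/x²) = x^{-λ₁} y^{-λ₂} Q_λ(x,y)` in the fraction field of ℤ[x,y]
(with the convention `P a b = 0` whenever `(a, b) ∉ ℕ₀²`). -/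
def IsPSU3 (Q P : ℤ → ℤ → Rxy) : Prop :=
  (∀ a b : ℤ, (a < 0 ∨ b < 0) → P a b = 0) ∧
  (∀ a b : ℤ, 0 ≤ a → 0 ≤ b →
    evST (P a b) = algebraMap Rxy Kxy (Q a b) / (xx ^ a * yy ^ b))

lemma xx_ne : xx ≠ 0 := by
  rw [xx, Ne, IsFractionRing.to_map_eq_zero_iff]
  exact X_ne_zero 0

lemma yy_ne : yy ≠ 0 := by
  rw [yy, Ne, IsFractionRing.to_map_eq_zero_iff]
  exact X_ne_zero 1

lemma aeval_eq_sum (p : Rxy) :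
    evST p = ∑ m ∈ p.support, (algebraMap ℤ Kxy (coeff m p)) * (sv ^ m 0 * tv ^ m 1) := by
  rw [evST]
  conv_lhs => rw [p.as_sum]
  rw [map_sum]
  refine Finset.sum_congr rfl fun m _ => ?_
  rw [aeval_monomial]
  congr 1
  rw [Finsupp.prod_fintype _ _ (fun i => pow_zero _), Fin.prod_univ_two]
  simp

lemma mono_key (d : ℕ) (i j : ℕ) (h0 : i ≤ d) (h1 : j ≤ d) :
    xx ^ (2*d) * yy ^ (2*d) * (sv ^ i * tv ^ j)
      = xx ^ (2*d + i - 2*j) * yy ^ (2*d + j - 2*i) := by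
  rw [sv, tv, div_pow, div_pow, ← pow_mul, ← pow_mul]
  rw [div_mul_div_comm]
  rw [mul_div_assoc', div_eq_iff (by
    exact mul_ne_zero (pow_ne_zero _ yy_ne) (pow_ne_zero _ xx_ne))]
  have e1 : (2*d + i - 2*j) + 2*j = 2*d + i := by omega
  have e2 : (2*d + j - 2*i) + 2*i = 2*d + j := by omega
  have h3 : xx ^ (2*d) * yy^(2*d) * (xx^i*yy^j)
      = xx^((2*d+i-2*j)+2*j) * yy^((2*d+j-2*i)+2*i) := by rw [e1, e2]; ring
  rw [h3, pow_add, pow_add]; ring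


noncomputable section Inj

def Efun (d : ℕ) (m : Fin 2 →₀ ℕ) : Fin 2 →₀ ℕ :=
  Finsupp.single 0 (2*d + m 0 - 2*(m 1)) + Finsupp.single 1 (2*d + m 1 - 2*(m 0))

lemma Efun_apply0 (d : ℕ) (m : Fin 2 →₀ ℕ) : Efun d m 0 = 2*d + m 0 - 2*(m 1) := by
  simp [Efun]

lemma Efun_apply1 (d : ℕ) (m : Fin 2 →₀ ℕ) : Efun d m 1 = 2*d + m 1 - 2*(m 0) := by
  simp [Efun]

lemma algebraMap_monomial (u : Fin 2 →₀ ℕ) (c : ℤ) :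
    algebraMap Rxy Kxy (monomial u c)
      = algebraMap ℤ Kxy c * (xx ^ u 0 * yy ^ u 1) := by
  have hu : u = Finsupp.single 0 (u 0) + Finsupp.single 1 (u 1) := by
    ext i
    fin_cases i <;> simp
  have h2 : (monomial u c : Rxy) = C c * X 0 ^ u 0 * X 1 ^ u 1 := by
    rw [X_pow_eq_monomial, X_pow_eq_monomial, C_mul_monomial, monomial_mul, mul_one, ← hu,
      mul_one]
  have hC : algebraMap Rxy Kxy (C c) = algebraMap ℤ Kxy c := by
    have h3 : algebraMap ℤ Kxy = (algebraMap Rxy Kxy).comp (algebraMap ℤ Rxy) :=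
      RingHom.ext_int _ _
    rw [h3, RingHom.comp_apply, MvPolynomial.algebraMap_eq]
  rw [h2, map_mul, map_mul, hC, map_pow, map_pow, xx, yy]
  ring

lemma evST_injective : Function.Injective evST := by
  have H : Function.Injective (aeval ![sv, tv] : Rxy →ₐ[ℤ] Kxy) := by
    rw [injective_iff_map_eq_zero]
    intro p hp
    by_contra hne
    set d := p.totalDegree with hd
    have hbound : ∀ m ∈ p.support, m 0 ≤ d ∧ m 1 ≤ d := by
      intro m hm
      have h := le_totalDegree hm
      have : m.sum (fun _ e => e) = m 0 + m 1 := by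
        rw [Finsupp.sum_fintype _ _ (fun _ => rfl), Fin.sum_univ_two]
      omega
    set q : Rxy := ∑ m ∈ p.support, monomial (Efun d m) (coeff m p) with hq
    have claim1 : algebraMap Rxy Kxy q = xx^(2*d) * yy^(2*d) * evST p := by
      rw [aeval_eq_sum, hq, map_sum, Finset.mul_sum]
      refine Finset.sum_congr rfl fun m hm => ?_
      rw [algebraMap_monomial, Efun_apply0, Efun_apply1,
        ← mono_key d (m 0) (m 1) (hbound m hm).1 (hbound m hm).2]
      ring
    have hev : evST p = 0 := hp
    rw [hev, mul_zero] at claim1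
    have hq0 : q = 0 := by
      rwa [IsFractionRing.to_map_eq_zero_iff] at claim1
    obtain ⟨m₀, hm₀⟩ := support_nonempty.2 hne
    have hc : coeff (Efun d m₀) q = coeff m₀ p := by
      rw [hq, coeff_sum]
      rw [Finset.sum_eq_single_of_mem m₀ hm₀]
      · rw [coeff_monomial, if_pos rfl]
      · intro m hm hne'
        rw [coeff_monomial, if_neg]
        intro hEq
        apply hne'
        have h0 : Efun d m 0 = Efun d m₀ 0 := by rw [hEq]
        have h1 : Efun d m 1 = Efun d m₀ 1 := by rw [hEq]
        rw [Efun_apply0, Efun_apply0] at h0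
        rw [Efun_apply1, Efun_apply1] at h1
        obtain ⟨hb0, hb1⟩ := hbound m hm
        obtain ⟨hb0', hb1'⟩ := hbound m₀ hm₀
        ext i
        match i with
        | 0 => omega
        | 1 => omega
    rw [hq0, coeff_zero] at hc
    exact mem_support_iff.1 hm₀ hc.symm
  exact H
end Inj

variable {Q P : ℤ → ℤ → Rxy}

/-- extended P/Q formula, valid for all integer indices. -/
lemma PQ (hQ : IsQSU3 Q) (hP : IsPSU3 Q P) (a b : ℤ) :
    evST (P a b) = algebraMap Rxy Kxy (Q a b) / (xx ^ a * yy ^ b) := by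
  by_cases h : 0 ≤ a ∧ 0 ≤ b
  · exact hP.2 a b h.1 h.2
  · have hneg : a < 0 ∨ b < 0 := by omega
    rw [hP.1 a b hneg, hQ.1 a b hneg, map_zero, zero_div]
    simp [evST]

/-- swapped Q recursion -/
lemma Qrel_y (hQ : IsQSU3 Q) (a b : ℤ) (ha : 0 ≤ a) (hb : 0 ≤ b) :
    X 1 * Q a b = Q a (b + 1) + Q (a - 1) b + Q (a + 1) (b - 1) := by
  have h := congrArg (rename (Equiv.swap (0 : Fin 2) 1)) (hQ.2.2.2.1 b a hb ha)
  rw [map_mul, map_add, map_add, rename_X, Equiv.swap_apply_left] at h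
  rw [hQ.2.2.2.2, hQ.2.2.2.2, hQ.2.2.2.2, hQ.2.2.2.2] at h
  exact h

lemma master1 (hQ : IsQSU3 Q) (hP : IsPSU3 Q P) (a b : ℤ) (ha : 0 ≤ a) (hb : 0 ≤ b) :
    evST (P a b) = evST (P (a+1) b) + sv * tv * evST (P a (b-1))
      + tv * evST (P (a-1) (b+1)) := by
  have hx := xx_ne; have hy := yy_ne
  have hxa : xx ^ a ≠ 0 := zpow_ne_zero a hx
  have hyb : yy ^ b ≠ 0 := zpow_ne_zero b hy
  have hQr := congrArg (algebraMap Rxy Kxy) (hQ.2.2.2.1 a b ha hb)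
  rw [map_mul, map_add, map_add] at hQr
  rw [show algebraMap Rxy Kxy (X 0) = xx from rfl] at hQr
  rw [PQ hQ hP, PQ hQ hP, PQ hQ hP, PQ hQ hP]
  rw [zpow_add₀ hx, zpow_sub₀ hy, zpow_sub₀ hx, zpow_add₀ hy]
  simp only [zpow_one]
  have t2 : sv * tv * (algebraMap Rxy Kxy (Q a (b-1)) / (xx^a * (yy^b / yy)))
      = algebraMap Rxy Kxy (Q a (b-1)) / (xx^a * xx * yy^b) := by
    rw [sv, tv]; field_simp
  have t3 : tv * (algebraMap Rxy Kxy (Q (a-1) (b+1)) / ((xx^a / xx) * (yy^b * yy)))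
      = algebraMap Rxy Kxy (Q (a-1) (b+1)) / (xx^a * xx * yy^b) := by
    rw [tv]; field_simp
  rw [t2, t3, ← add_div, ← add_div, ← hQr]
  rw [show xx^a * xx * yy^b = xx * (xx^a * yy^b) by ring]
  rw [mul_div_mul_left _ _ hx]

lemma master2 (hQ : IsQSU3 Q) (hP : IsPSU3 Q P) (a b : ℤ) (ha : 0 ≤ a) (hb : 0 ≤ b) :
    evST (P a b) = evST (P a (b+1)) + sv * tv * evST (P (a-1) b)
      + sv * evST (P (a+1) (b-1)) := by
  have hx := xx_ne; have hy := yy_ne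
  have hxa : xx ^ a ≠ 0 := zpow_ne_zero a hx
  have hyb : yy ^ b ≠ 0 := zpow_ne_zero b hy
  have hQr := congrArg (algebraMap Rxy Kxy) (Qrel_y hQ a b ha hb)
  rw [map_mul, map_add, map_add] at hQr
  rw [show algebraMap Rxy Kxy (X 1) = yy from rfl] at hQr
  rw [PQ hQ hP, PQ hQ hP, PQ hQ hP, PQ hQ hP]
  rw [zpow_add₀ hy, zpow_sub₀ hx, zpow_add₀ hx, zpow_sub₀ hy]
  simp only [zpow_one]
  have t2 : sv * tv * (algebraMap Rxy Kxy (Q (a-1) b) / ((xx^a / xx) * yy^b))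
      = algebraMap Rxy Kxy (Q (a-1) b) / (xx^a * (yy^b * yy)) := by
    rw [sv, tv]; field_simp
  have t3 : sv * (algebraMap Rxy Kxy (Q (a+1) (b-1)) / ((xx^a * xx) * (yy^b / yy)))
      = algebraMap Rxy Kxy (Q (a+1) (b-1)) / (xx^a * (yy^b * yy)) := by
    rw [sv]; field_simp
  rw [t2, t3]
  rw [show xx^a * (yy^b*yy) = xx^a * yy^b * yy by ring, ← add_div, ← add_div]
  rw [show algebraMap Rxy Kxy (Q a (b+1)) + algebraMap Rxy Kxy (Q (a-1) b)
      + algebraMap Rxy Kxy (Q (a+1) (b-1)) = yy * algebraMap Rxy Kxy (Q a b) from hQr.symm]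
  rw [show xx^a * yy^b * yy = yy * (xx^a * yy^b) by ring]
  rw [mul_div_mul_left _ _ hy]

lemma PL1 (hQ : IsQSU3 Q) (hP : IsPSU3 Q P) (a b : ℤ) (ha : 0 ≤ a) (hb : 0 ≤ b) :
    P a b = P (a+1) b + X 0 * X 1 * P a (b-1) + X 1 * P (a-1) (b+1) := by
  apply evST_injective
  have hrhs : evST (P (a+1) b + X 0 * X 1 * P a (b-1) + X 1 * P (a-1) (b+1))
      = evST (P (a+1) b) + sv * tv * evST (P a (b-1)) + tv * evST (P (a-1) (b+1)) := by
    simp only [evST, map_add, map_mul, aeval_X, Matrix.cons_val_zero, Matrix.cons_val_one,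
      Matrix.head_cons]
  rw [hrhs, ← master1 hQ hP a b ha hb]

lemma PL2 (hQ : IsQSU3 Q) (hP : IsPSU3 Q P) (a b : ℤ) (ha : 0 ≤ a) (hb : 0 ≤ b) :
    P a b = P a (b+1) + X 0 * X 1 * P (a-1) b + X 0 * P (a+1) (b-1) := by
  apply evST_injective
  have hrhs : evST (P a (b+1) + X 0 * X 1 * P (a-1) b + X 0 * P (a+1) (b-1))
      = evST (P a (b+1)) + sv * tv * evST (P (a-1) b) + sv * evST (P (a+1) (b-1)) := by
    simp only [evST, map_add, map_mul, aeval_X, Matrix.cons_val_zero, Matrix.cons_val_one,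
      Matrix.head_cons]
  rw [hrhs, ← master2 hQ hP a b ha hb]

/-- same-level ("dagger") identity -/
lemma Pdagger (hQ : IsQSU3 Q) (hP : IsPSU3 Q P) (a b : ℤ) (ha : 0 ≤ a) (hb : 1 ≤ b) :
    P (a+1) (b-1) = P a b - X 1 * P (a-1) (b+1) + X 0 * P (a+2) (b-2) := by
  have h1 := PL1 hQ hP a b ha (by omega)
  have h2 := PL2 hQ hP (a+1) (b-1) (by omega) (by omega)
  rw [show (b:ℤ)-1+1 = b by ring, show (a:ℤ)+1-1 = a by ring, show (a:ℤ)+1+1 = a+2 by ring,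
    show (b:ℤ)-1-1 = b-2 by ring] at h2
  linear_combination h2 - h1

lemma Cross (hQ : IsQSU3 Q) (hP : IsPSU3 Q P) (n : ℤ) (hn : 0 ≤ n) :
    P n 0 = P (n+1) 0 + X 1 * P (n-1) 1 := by
  have h1 := PL1 hQ hP n 0 hn le_rfl
  have hz : P n (0-1) = 0 := hP.1 n (0-1) (Or.inr (by norm_num))
  rw [show ((0:ℤ)+1 : ℤ) = 1 by norm_num] at h1
  linear_combination h1 + X 0 * X 1 * hz

lemma P00 (hQ : IsQSU3 Q) (hP : IsPSU3 Q P) : P 0 0 = 1 := by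
  apply evST_injective
  rw [PQ hQ hP 0 0, hQ.2.1]
  simp [evST]

lemma Pone (hQ : IsQSU3 Q) (hP : IsPSU3 Q P) (n : ℕ) :
    ∃ g : Rxy, P (n:ℤ) 0 = 1 - X 1 * g := by
  induction n with
  | zero => exact ⟨0, by simpa using P00 hQ hP⟩
  | succ n ih =>
    obtain ⟨g, hg⟩ := ih
    refine ⟨g + P ((n:ℤ)-1) 1, ?_⟩
    have hc := Cross hQ hP (n:ℤ) (by positivity)
    push_cast
    linear_combination hg - hc

theorem stmt_5 (Q P : ℤ → ℤ → Rxy) (hQ : IsQSU3 Q) (hP : IsPSU3 Q P) (k : ℕ) (hk : 1 ≤ k) :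
    Ideal.span ({P ((k : ℤ) + 1) 0, P ((k : ℤ) + 2) 0} : Set Rxy) =
      Ideal.span {p : Rxy | ∃ a b : ℕ, a + b = k + 1 ∧ p = P (a : ℤ) (b : ℤ)} := by
  set N : ℕ := k + 1 with hN
  have hcast1 : ((k:ℤ)+1) = (N:ℤ) := by rw [hN]; push_cast; ring
  have hcast2 : ((k:ℤ)+2) = (N:ℤ)+1 := by rw [hN]; push_cast; ring
  rw [hcast1, hcast2]
  set I := Ideal.span ({P (N:ℤ) 0, P ((N:ℤ)+1) 0} : Set Rxy) with hI
  clear_value N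
  have hPn0 : P (N:ℤ) 0 ∈ I := Ideal.subset_span (Set.mem_insert _ _)
  have hPn1 : P ((N:ℤ)+1) 0 ∈ I := Ideal.subset_span (Set.mem_insert_of_mem _ rfl)
  obtain ⟨g, hg⟩ := Pone hQ hP (N+1)
  have hg' : P ((N:ℤ)+1) 0 = 1 - X 1 * g := by push_cast at hg; exact hg
  have cancel : ∀ f : Rxy, X 1 * f ∈ I → f ∈ I := by
    intro f hf
    have hfe : f = P ((N:ℤ)+1) 0 * f + g * (X 1 * f) := by linear_combination (-f) * hg'
    rw [hfe]
    exact add_mem (Ideal.mul_mem_right f I hPn1) (Ideal.mul_mem_left I g hf)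
  have cancelPow : ∀ m : ℕ, ∀ f : Rxy, X 1 ^ m * f ∈ I → f ∈ I := by
    intro m
    induction m with
    | zero => intro f hf; simpa using hf
    | succ m ih =>
      intro f hf
      have h2 : X 1 ^ m * (X 1 * f) ∈ I := by
        rwa [show X 1 ^ m * (X 1 * f) = X 1 ^ (m+1) * f by ring]
      exact cancel f (ih _ h2)
  have claimC : ∀ j : ℕ, X 1 ^ j * P ((N:ℤ) - (j:ℤ)) (j:ℤ) ∈ I := by
    intro j
    induction j using Nat.strong_induction_on with
    | _ j ih =>
      match j, ih with
      | 0, _ => simpa using hPn0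
      | 1, _ =>
        have hc := Cross hQ hP (N:ℤ) (by positivity)
        have key1 : X 1 ^ 1 * P ((N:ℤ)-1) 1 = P (N:ℤ) 0 - P ((N:ℤ)+1) 0 := by
          linear_combination -hc
        push_cast
        rw [key1]
        exact sub_mem hPn0 hPn1
      | 2, ih =>
        have hdag := Pdagger hQ hP ((N:ℤ)-1) 1 (by
          have : 1 ≤ N := by omega
          omega) le_rfl
        rw [show ((N:ℤ)-1+1 : ℤ) = (N:ℤ) by ring, show ((N:ℤ)-1-1 : ℤ) = (N:ℤ)-2 by ring,
          show ((N:ℤ)-1+2 : ℤ) = (N:ℤ)+1 by ring, show ((1:ℤ)-1 : ℤ) = 0 by norm_num,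
          show ((1:ℤ)+1 : ℤ) = 2 by norm_num, show ((1:ℤ)-2 : ℤ) = -1 by norm_num] at hdag
        have hz : P ((N:ℤ)+1) (-1) = 0 := hP.1 _ _ (Or.inr (by norm_num))
        have h1 := ih 1 (by omega)
        push_cast at h1 ⊢
        have key2 : X 1 ^ 2 * P ((N:ℤ)-2) 2
            = X 1 ^ 1 * P ((N:ℤ)-1) 1 - X 1 * P (N:ℤ) 0 := by
          linear_combination X 1 * hdag + X 1 * X 0 * hz
        rw [key2]
        exact sub_mem h1 (Ideal.mul_mem_left I _ hPn0)
      | (j+3), ih =>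
        by_cases hj : ((N:ℤ) - ((j:ℤ)+3) < 0)
        · push_cast
          rw [hP.1 _ _ (Or.inl hj), mul_zero]
          exact zero_mem I
        · have hdag := Pdagger hQ hP ((N:ℤ)-(j:ℤ)-2) ((j:ℤ)+2) (by omega) (by omega)
          rw [show ((N:ℤ)-(j:ℤ)-2+1 : ℤ) = (N:ℤ)-((j:ℤ)+1) by ring,
            show ((N:ℤ)-(j:ℤ)-2-1 : ℤ) = (N:ℤ)-((j:ℤ)+3) by ring,
            show ((N:ℤ)-(j:ℤ)-2+2 : ℤ) = (N:ℤ)-(j:ℤ) by ring,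
            show ((N:ℤ)-(j:ℤ)-2 : ℤ) = (N:ℤ)-((j:ℤ)+2) by ring,
            show ((j:ℤ)+2-1 : ℤ) = (j:ℤ)+1 by ring,
            show ((j:ℤ)+2+1 : ℤ) = (j:ℤ)+3 by ring,
            show ((j:ℤ)+2-2 : ℤ) = (j:ℤ) by ring] at hdag
          have h2 := ih (j+2) (by omega)
          have h1 := ih (j+1) (by omega)
          have h0 := ih j (by omega)
          push_cast at h2 h1 h0 ⊢
          have key : X 1 ^ (j+3) * P ((N:ℤ)-((j:ℤ)+3)) ((j:ℤ)+3)
              = X 1 ^ (j+2) * P ((N:ℤ)-((j:ℤ)+2)) ((j:ℤ)+2)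
                - X 1 * (X 1 ^ (j+1) * P ((N:ℤ)-((j:ℤ)+1)) ((j:ℤ)+1))
                + X 0 * X 1 ^ 2 * (X 1 ^ j * P ((N:ℤ)-(j:ℤ)) (j:ℤ)) := by
            linear_combination (X 1 ^ (j+2)) * hdag
          rw [key]
          exact add_mem (sub_mem h2 (Ideal.mul_mem_left I _ h1)) (Ideal.mul_mem_left I _ h0)
  apply le_antisymm
  · rw [Ideal.span_le]
    rintro p hp
    simp only [Set.mem_insert_iff, Set.mem_singleton_iff] at hp
    rcases hp with rfl | rfl
    · exact Ideal.subset_span ⟨N, 0, by omega, by norm_num⟩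
    · have hc := Cross hQ hP (N:ℤ) (by positivity)
      have hrw : P ((N:ℤ)+1) 0 = P (N:ℤ) 0 - X 1 * P ((N:ℤ)-1) 1 := by linear_combination -hc
      rw [hrw]
      refine sub_mem (Ideal.subset_span ⟨N, 0, by omega, by norm_num⟩)
        (Ideal.mul_mem_left _ _ (Ideal.subset_span ⟨k, 1, by omega, ?_⟩))
      congr 1
      omega
  · rw [Ideal.span_le]
    rintro p ⟨a, b, hab, rfl⟩
    have hcb := claimC b
    rw [show ((N:ℤ) - (b:ℤ) : ℤ) = (a:ℤ) by omega] at hcb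
    exact cancelPow b _ hcb

end
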